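/- Let T be a positive invertible element of a unital C*-algebra with m·1 ≤ T ≤ M·1 ≤ 1 for real numbers 0 < m ≤ M ≤ 1, and let λ ∈ [0,1]. Then (1-λ)T + λ·1 ≤ C · T^{1-λ}, where C = max over t ∈ [m, M] of exp( λ(1-λ)(1 - 1/t)² ). -/

import Mathlib

lemma stmt6_aux_log (lam : ℝ) (h0 : 0 ≤ lam) (h1 : lam ≤ 1) {u : ℝ} (hu : 1 ≤ u) :
    Real.log (1 + lam * (u - 1)) ≤ lam * (1 - lam) * (u - 1) ^ 2 + lam * Real.log u := by
  set g : ℝ → ℝ := fun x => lam * (1 - lam) * (x - 1) ^ 2 + lam * Real.log x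
    - Real.log (1 + lam * (x - 1)) with hg
  have hder : ∀ x ∈ interior (Set.Ici (1 : ℝ)), HasDerivAt g
      (lam * (1 - lam) * (2 * (x - 1)) + lam * x⁻¹ - lam / (1 + lam * (x - 1))) x := by
    intro x hx
    rw [interior_Ici] at hx
    have hx1 : (1 : ℝ) < x := hx
    have hx0 : x ≠ 0 := by positivity
    have hv : (1 : ℝ) ≤ 1 + lam * (x - 1) := by nlinarith
    have hvne : 1 + lam * (x - 1) ≠ 0 := by positivity
    have d1 : HasDerivAt (fun x : ℝ => lam * (1 - lam) * (x - 1) ^ 2)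
        (lam * (1 - lam) * (2 * (x - 1))) x := by
      have := (((hasDerivAt_id x).sub_const 1).pow 2).const_mul (lam * (1 - lam))
      refine this.congr_deriv ?_
      simp only [id_eq]; ring
    have d2 : HasDerivAt (fun x : ℝ => lam * Real.log x) (lam * x⁻¹) x :=
      (Real.hasDerivAt_log hx0).const_mul lam
    have dinner : HasDerivAt (fun x : ℝ => 1 + lam * (x - 1)) lam x := by
      have := ((hasDerivAt_id x).sub_const 1).const_mul lam |>.const_add 1
      refine this.congr_deriv ?_
      ring
    have d3 : HasDerivAt (fun x : ℝ => Real.log (1 + lam * (x - 1)))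
        (lam / (1 + lam * (x - 1))) x := dinner.log hvne
    exact (d1.add d2).sub d3
  have hcont : ContinuousOn g (Set.Ici 1) := by
    apply ContinuousOn.sub
    · apply ContinuousOn.add (by fun_prop)
      refine ContinuousOn.mul continuousOn_const ?_
      refine Real.continuousOn_log.comp (by fun_prop) ?_
      intro x hx
      simp only [Set.mem_compl_iff, Set.mem_singleton_iff]
      exact ne_of_gt (lt_of_lt_of_le one_pos hx)
    · refine Real.continuousOn_log.comp (by fun_prop) ?_
      intro x hx
      simp only [Set.mem_compl_iff, Set.mem_singleton_iff]
      have : (1 : ℝ) ≤ x := hx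
      nlinarith
  have hmono : MonotoneOn g (Set.Ici 1) := by
    refine monotoneOn_of_deriv_nonneg (convex_Ici 1) hcont
      (fun x hx => (hder x hx).differentiableAt.differentiableWithinAt) ?_
    intro x hx
    rw [(hder x hx).deriv]
    rw [interior_Ici] at hx
    have hx1 : (1 : ℝ) < x := hx
    have hv : (1 : ℝ) ≤ 1 + lam * (x - 1) := by nlinarith
    have hx0 : (0 : ℝ) < x := by linarith
    have hv0 : (0 : ℝ) < 1 + lam * (x - 1) := by linarith
    have hxv : (1 : ℝ) ≤ x * (1 + lam * (x - 1)) := by nlinarith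
    have hb : 0 ≤ lam * (1 - lam) * (x - 1) := by
      exact mul_nonneg (mul_nonneg h0 (by linarith)) (by linarith)
    have heq : lam * x⁻¹ - lam / (1 + lam * (x - 1))
        = -(lam * (1 - lam) * (x - 1) / (x * (1 + lam * (x - 1)))) := by
      field_simp
      ring
    have hdiv : lam * (1 - lam) * (x - 1) / (x * (1 + lam * (x - 1)))
        ≤ lam * (1 - lam) * (x - 1) := div_le_self hb hxv
    linarith
  have h1eq : g 1 = 0 := by simp [hg]
  have := hmono (Set.self_mem_Ici) hu hu
  rw [h1eq] at this
  simp only [hg] at this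
  linarith

lemma stmt6_aux_scalar (lam : ℝ) (h0 : 0 ≤ lam) (h1 : lam ≤ 1) {t : ℝ}
    (ht : 0 < t) (ht1 : t ≤ 1) :
    (1 - lam) * t + lam ≤ Real.exp (lam * (1 - lam) * (1 - 1 / t) ^ 2) * t ^ (1 - lam) := by
  set u : ℝ := 1 / t with hu_def
  have hu : 1 ≤ u := by rw [hu_def]; exact one_le_one_div ht ht1
  have hA := stmt6_aux_log lam h0 h1 hu
  have hlogu : Real.log u = -Real.log t := by
    rw [hu_def, one_div, Real.log_inv]
  have hsq : (u - 1) ^ 2 = (1 - 1 / t) ^ 2 := by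
    rw [hu_def]; ring
  have hL : 0 < (1 - lam) * t + lam := by nlinarith
  have hv0 : (0 : ℝ) < 1 + lam * (u - 1) := by nlinarith
  have hfact : (1 - lam) * t + lam = t * (1 + lam * (u - 1)) := by
    rw [hu_def]
    field_simp
    ring
  have hR : (0 : ℝ) < Real.exp (lam * (1 - lam) * (1 - 1 / t) ^ 2) * t ^ (1 - lam) :=
    mul_pos (Real.exp_pos _) (Real.rpow_pos_of_pos ht _)
  rw [← Real.exp_log hL, ← Real.exp_log hR]
  apply Real.exp_le_exp.2
  rw [hfact, Real.log_mul (ne_of_gt ht) (ne_of_gt hv0),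
    Real.log_mul (ne_of_gt (Real.exp_pos _)) (ne_of_gt (Real.rpow_pos_of_pos ht _)),
    Real.log_exp, Real.log_rpow ht]
  rw [hlogu, hsq] at hA
  linarith

/-- Let `T` be a positive invertible element of a unital C*-algebra with
`m·1 ≤ T ≤ M·1 ≤ 1` for reals `0 < m ≤ M ≤ 1`, and let `λ ∈ [0,1]`. Then
`(1-λ)T + λ·1 ≤ C · T^(1-λ)`, where `C` is the maximum of
`t ↦ exp(λ(1-λ)(1 - 1/t)²)` over `t ∈ [m, M]`. -/
theorem stmt_6 {A : Type*} [CStarAlgebra A] [PartialOrder A] [StarOrderedRing A]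
    (T : A) (hT : 0 ≤ T) (hTunit : IsUnit T)
    (m M lam C : ℝ) (hm : 0 < m) (hmM : m ≤ M) (hM1 : M ≤ 1)
    (hmT : m • (1 : A) ≤ T) (hTM : T ≤ M • (1 : A))
    (hlam : lam ∈ Set.Icc (0 : ℝ) 1)
    (hC : IsGreatest ((fun t : ℝ => Real.exp (lam * (1 - lam) * (1 - 1 / t) ^ 2)) ''
      Set.Icc m M) C) :
    (1 - lam) • T + lam • (1 : A) ≤ C • T ^ (1 - lam) := by
  obtain ⟨hl0, hl1⟩ := hlam
  have hTsa : IsSelfAdjoint T := .of_nonneg hT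
  have hspec : spectrum ℝ T ⊆ Set.Icc m M := by
    intro x hx
    constructor
    · exact (algebraMap_le_iff_le_spectrum (R := ℝ) (a := T)).mp
        (by rwa [Algebra.algebraMap_eq_smul_one]) x hx
    · exact (le_algebraMap_iff_spectrum_le (R := ℝ) (a := T)).mp
        (by rwa [Algebra.algebraMap_eq_smul_one]) x hx
  -- RHS as real cfc
  have hg_cont : ContinuousOn (fun x : ℝ => ((x.toNNReal ^ (1 - lam) : NNReal) : ℝ))
      (spectrum ℝ T) := by
    have : Continuous (fun x : ℝ => ((x.toNNReal ^ (1 - lam) : NNReal) : ℝ)) :=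
      NNReal.continuous_coe.comp
        ((NNReal.continuous_rpow_const (by linarith)).comp continuous_real_toNNReal)
    exact this.continuousOn
  have hrhs : C • T ^ (1 - lam) = cfc (fun x : ℝ =>
      C * ((x.toNNReal ^ (1 - lam) : NNReal) : ℝ)) T := by
    rw [CFC.rpow_def, cfc_nnreal_eq_real (fun x : NNReal => x ^ (1 - lam)) T hT,
      cfc_const_mul C _ T hg_cont]
  have hlhs : (1 - lam) • T + lam • (1 : A) = cfc (fun x : ℝ => (1 - lam) * x + lam) T := by
    rw [cfc_add T (fun x => (1 - lam) * x) (fun _ => lam) (by fun_prop) (by fun_prop),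
      cfc_const_mul_id (1 - lam) T, cfc_const lam T, Algebra.algebraMap_eq_smul_one]
  rw [hlhs, hrhs]
  apply cfc_mono (hf := by fun_prop) (hg := hg_cont.const_smul C)
  intro x hx
  obtain ⟨hmx, hxM⟩ := hspec hx
  have hx0 : 0 < x := lt_of_lt_of_le hm hmx
  have hx1 : x ≤ 1 := hxM.trans hM1
  have hcoe : ((x.toNNReal ^ (1 - lam) : NNReal) : ℝ) = x ^ (1 - lam) := by
    rw [NNReal.coe_rpow, Real.coe_toNNReal x hx0.le]
  show (1 - lam) * x + lam ≤ C * ((x.toNNReal ^ (1 - lam) : NNReal) : ℝ)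
  rw [hcoe]
  calc (1 - lam) * x + lam
      ≤ Real.exp (lam * (1 - lam) * (1 - 1 / x) ^ 2) * x ^ (1 - lam) :=
        stmt6_aux_scalar lam hl0 hl1 hx0 hx1
    _ ≤ C * x ^ (1 - lam) := by
        apply mul_le_mul_of_nonneg_right (hC.2 ⟨x, ⟨hmx, hxM⟩, rfl⟩)
        exact (Real.rpow_pos_of_pos hx0 _).le
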